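/- Let F : C → D be a homotopy functor between model categories among non-negatively graded chain complexes, unbounded chain complexes, and algebras over a reduced operad, and suppose F is reduced (F(0) ≃ 0). Then T₁F(X) ≃ Ω F(Σ X), where T₁F(X) is the homotopy limit of F(X * {1}) → F(X * {1,2}) ← F(X * {1}), X * T denotes the homotopy cofiber of the fold map ∐_T X → X, and consequently P₁F(X) ≃ hocolim_{p→∞} Ωᵖ F(Σᵖ X). -/

import Mathlib

open CategoryTheory Limits HomologicalComplex ZeroObject CochainComplex CochainComplex.HomComplex

noncomputable section

namespace GoodwillieLinear

variable (k : Type) [Field k]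

/-- Unbounded (cohomologically `ℤ`-indexed) chain complexes of `k`-vector spaces. -/
abbrev Ch := CochainComplex (ModuleCat.{0} k) ℤ

instance : HasFiniteBiproducts (Ch k) := HasFiniteBiproducts.of_hasFiniteProducts

variable {k}

/-- Two complexes are weakly equivalent if they are connected by a roof of
quasi-isomorphisms. -/
def WeaklyEquivalent (A B : Ch k) : Prop :=
  ∃ (W : Ch k) (f : W ⟶ A) (g : W ⟶ B), QuasiIso f ∧ QuasiIso g

/-- A commutative square in `Ch` is homotopy coCartesian if the comparison map
`cone(A → B ⊕ C) ⟶ D` is a quasi-isomorphism.  (Since `Ch` is a stable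
category—fiber and cofiber sequences agree up to shift—this same condition also
characterizes homotopy Cartesian squares.) -/
def IsHCocartSq {A B C D : Ch k} (f : A ⟶ B) (g : A ⟶ C) (u : B ⟶ D) (v : C ⟶ D)
    (w : f ≫ u = g ≫ v) : Prop :=
  QuasiIso
    (CochainComplex.mappingCone.desc (biprod.lift f g) 0 (biprod.desc u (-v))
      (by
        rw [δ_zero]
        have : biprod.lift f g ≫ biprod.desc u (-v) = 0 := by
          rw [biprod.lift_desc, Preadditive.comp_neg, w, add_neg_cancel]
        rw [this, Cochain.ofHom_zero]))

/-- Homotopy Cartesian squares in the stable category `Ch` (see `IsHCocartSq`). -/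
def IsHCartSq {A B C D : Ch k} (f : A ⟶ B) (g : A ⟶ C) (u : B ⟶ D) (v : C ⟶ D)
    (w : f ≫ u = g ≫ v) : Prop :=
  IsHCocartSq f g u v w

/-- A homotopy functor of several variables indexed by `Fin r`. -/
def IsHomotopyFunctorPi {r : ℕ} (L : (∀ _ : Fin r, Ch k) ⥤ Ch k) : Prop :=
  ∀ ⦃A B : ∀ _ : Fin r, Ch k⦄ (f : A ⟶ B), (∀ i, QuasiIso (f i)) → QuasiIso (L.map f)

/-- The morphism of families which is `φ` in slot `i` and the identity elsewhere. -/
def piUpdateHom {r : ℕ} (X : Fin r → Ch k) (i : Fin r) {A B : Ch k} (φ : A ⟶ B) :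
    (Function.update X i A) ⟶ (Function.update X i B) := fun j =>
  if h : j = i then
    eqToHom (by subst h; simp) ≫ φ ≫ eqToHom (by subst h; simp)
  else
    eqToHom (by rw [Function.update_of_ne h, Function.update_of_ne h])

lemma piUpdateHom_comp {r : ℕ} (X : Fin r → Ch k) (i : Fin r) {A B C : Ch k}
    (φ : A ⟶ B) (ψ : B ⟶ C) :
    piUpdateHom X i φ ≫ piUpdateHom X i ψ = piUpdateHom X i (φ ≫ ψ) := by
  funext j
  show piUpdateHom X i φ j ≫ piUpdateHom X i ψ j = piUpdateHom X i (φ ≫ ψ) j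
  by_cases h : j = i
  · subst h; simp [piUpdateHom]
  · simp [piUpdateHom, h]

/-- `L` is reduced in slot `i`: substituting `0` in the `i`-th slot yields an acyclic
complex, whatever the other entries are. -/
def ReducedInSlot {r : ℕ} (L : (∀ _ : Fin r, Ch k) ⥤ Ch k) (i : Fin r) : Prop :=
  ∀ (X : Fin r → Ch k) (d : ℤ), (L.obj (Function.update X i 0)).ExactAt d

/-- `L` is linear (`1`-excisive) in slot `i`: with the other entries fixed, it sends
homotopy pushout squares in the `i`-th slot to homotopy pullback squares. -/
def LinearInSlot {r : ℕ} (L : (∀ _ : Fin r, Ch k) ⥤ Ch k) (i : Fin r) : Prop :=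
  ∀ (X : Fin r → Ch k) ⦃A B C D : Ch k⦄ (f : A ⟶ B) (g : A ⟶ C) (u : B ⟶ D) (v : C ⟶ D)
    (w : f ≫ u = g ≫ v) (hw : IsHCocartSq f g u v w),
    IsHCartSq (L.map (piUpdateHom X i f)) (L.map (piUpdateHom X i g))
      (L.map (piUpdateHom X i u)) (L.map (piUpdateHom X i v))
      (by rw [← L.map_comp, ← L.map_comp, piUpdateHom_comp, piUpdateHom_comp, w])

/-- An `r`-multilinear (reduced, homotopy) functor. -/
def IsMultilinear {r : ℕ} (L : (∀ _ : Fin r, Ch k) ⥤ Ch k) : Prop :=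
  IsHomotopyFunctorPi L ∧ ∀ i : Fin r, ReducedInSlot L i ∧ LinearInSlot L i


/-- The functorial map of mapping cones induced by a commuting square. -/
def coneMapOfSq {A B A' B' : Ch k} (f : A ⟶ B) (g : A' ⟶ B') (α : A ⟶ A') (β : B ⟶ B')
    (w : f ≫ β = α ≫ g) : mappingCone f ⟶ mappingCone g :=
  mappingCone.desc f ((Cochain.ofHom α).comp (mappingCone.inl g) (zero_add (-1)))
    (β ≫ mappingCone.inr g)
    (by
      rw [δ_ofHom_comp, mappingCone.δ_inl, ← Cochain.ofHom_comp, ← Category.assoc, ← w,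
        Category.assoc])

/-- The cone of `𝟙 X`: the join `X * {1}` (the cofiber of the fold map `∐_{\{1\}} X → X`,
i.e. a model of the cone `cX`). -/
def joinOne (X : Ch k) : Ch k := mappingCone (𝟙 X)

/-- The fold map `X ⊞ X ⟶ X`. -/
def fold2 (X : Ch k) : X ⊞ X ⟶ X := biprod.desc (𝟙 X) (𝟙 X)

/-- The join `X * {1,2}`: the cofiber of the fold map `X ⊕ X → X`, a model of the
suspension `Σ X`. -/
def joinTwo (X : Ch k) : Ch k := mappingCone (fold2 X)

/-- `X * {1} → X * {1,2}` induced by the inclusion `{1} ↪ {1,2}` (first copy). -/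
def joinMap₁ (X : Ch k) : joinOne X ⟶ joinTwo X :=
  coneMapOfSq (𝟙 X) (fold2 X) biprod.inl (𝟙 X) (by simp [fold2])

/-- `X * {1} → X * {1,2}` induced by the inclusion `{1} ↪ {1,2}` (second copy). -/
def joinMap₂ (X : Ch k) : joinOne X ⟶ joinTwo X :=
  coneMapOfSq (𝟙 X) (fold2 X) biprod.inr (𝟙 X) (by simp [fold2])

/-- The homotopy pullback of a cospan `A → C ← B` of complexes, modeled as the
desuspended mapping cone of `(f, -g) : A ⊕ B → C`. -/
def hoPullback {A B C : Ch k} (f : A ⟶ C) (g : B ⟶ C) : Ch k :=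
  (mappingCone (biprod.desc f (-g)))⟦(-1 : ℤ)⟧

/-- A reduced functor. -/
def IsReducedF (F : Ch k ⥤ Ch k) : Prop := ∀ i : ℤ, (F.obj 0).ExactAt i

/-- A homotopy functor. -/
def IsHomotopyF (F : Ch k ⥤ Ch k) : Prop :=
  ∀ ⦃A B : Ch k⦄ (f : A ⟶ B), QuasiIso f → QuasiIso (F.map f)

/-- The mapping cone of the identity (the cone on `X`) is acyclic. -/
lemma exactAt_joinOne (X : Ch k) (n : ℤ) : (joinOne X).ExactAt n := by
  rw [HomologicalComplex.exactAt_iff_isZero_homology, IsZero.iff_id_eq_zero,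
    ← HomologicalComplex.homologyMap_id]
  show HomologicalComplex.homologyMap (𝟙 (CochainComplex.mappingCone (𝟙 X))) n = 0
  rw [(CochainComplex.mappingCone.homotopyToZeroOfId X).homologyMap_eq n,
    HomologicalComplex.homologyMap_zero]

/-- The zero complex is acyclic. -/
lemma exactAt_zeroComplex (n : ℤ) : (0 : Ch k).ExactAt n := by
  rw [HomologicalComplex.exactAt_iff_isZero_homology]
  exact (HomologicalComplex.homologyFunctor (ModuleCat k) (ComplexShape.up ℤ) n).map_isZero
    (isZero_zero _)

/-- The biproduct of two acyclic complexes is acyclic. -/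
lemma exactAt_biprod {P Q : Ch k} {n : ℤ} (hP : P.ExactAt n) (hQ : Q.ExactAt n) :
    (P ⊞ Q).ExactAt n := by
  rw [HomologicalComplex.exactAt_iff_isZero_homology] at hP hQ ⊢
  rw [IsZero.iff_id_eq_zero, ← HomologicalComplex.homologyMap_id, ← biprod.total]
  have h1 : HomologicalComplex.homologyMap (biprod.inl : P ⟶ P ⊞ Q) n = 0 :=
    hP.eq_of_src _ _
  have h2 : HomologicalComplex.homologyMap (biprod.inr : Q ⟶ P ⊞ Q) n = 0 :=
    hQ.eq_of_src _ _
  rw [HomologicalComplex.homologyMap_add, HomologicalComplex.homologyMap_comp,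
    HomologicalComplex.homologyMap_comp, h1, h2, comp_zero, comp_zero, add_zero]

/-- If the source of `φ` is acyclic, then `inr : Q ⟶ cone(φ)` is a quasi-isomorphism.
This is the long exact sequence of the mapping cone triangle. -/
lemma quasiIso_inr_of_exact {A B : Ch k} (φ : A ⟶ B) (hA : ∀ n : ℤ, A.ExactAt n) :
    QuasiIso (CochainComplex.mappingCone.inr φ) := by
  rw [quasiIso_iff]
  intro n
  rw [quasiIsoAt_iff_isIso_homologyMap]
  set F := HomotopyCategory.homologyFunctor (ModuleCat k) (ComplexShape.up ℤ) 0 with hF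
  have hz : ∀ m : ℤ, IsZero ((HomotopyCategory.homologyFunctor (ModuleCat k)
      (ComplexShape.up ℤ) m).obj ((HomotopyCategory.quotient _ _).obj A)) := fun m =>
    ((HomotopyCategory.homologyFunctorFactors (ModuleCat k)
      (ComplexShape.up ℤ) m).app A).isZero_iff.2
      ((HomologicalComplex.exactAt_iff_isZero_homology _ _).1 (hA m))
  have hT := HomotopyCategory.mappingCone_triangleh_distinguished φ
  have h2 := F.homologySequence_exact₂ _ hT n
  have h3 := F.homologySequence_exact₃ _ hT n (n + 1) rfl
  have hmono : Mono ((F.shift n).map (CochainComplex.mappingCone.triangleh φ).mor₂) :=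
    h2.mono_g ((hz n).eq_of_src _ _)
  have hepi : Epi ((F.shift n).map (CochainComplex.mappingCone.triangleh φ).mor₂) :=
    h3.epi_f ((hz (n + 1)).eq_of_tgt _ _)
  have hiso : IsIso ((F.shift n).map (CochainComplex.mappingCone.triangleh φ).mor₂) :=
    isIso_of_mono_of_epi _
  have heq : (F.shift n).map (CochainComplex.mappingCone.triangleh φ).mor₂ =
      ((HomotopyCategory.quotient (ModuleCat k) (ComplexShape.up ℤ)) ⋙
        HomotopyCategory.homologyFunctor (ModuleCat k) (ComplexShape.up ℤ) n).map
        (CochainComplex.mappingCone.inr φ) := rfl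
  rw [heq] at hiso
  exact (NatIso.isIso_map_iff (HomotopyCategory.homologyFunctorFactors (ModuleCat k)
    (ComplexShape.up ℤ) n) (CochainComplex.mappingCone.inr φ)).1 hiso

/-!
STATEMENT 9.  Let `F : Ch → Ch` be a reduced homotopy functor.  Then
`T₁F(X) ≃ Ω F(Σ X)`, where `T₁F(X)` is the homotopy limit of
`F(X * {1}) → F(X * {1,2}) ← F(X * {1})`, and `X * T` is the homotopy cofiber of the
fold map `∐_T X → X`  (so `X * {1}` is the cone on `X` and `X * {1,2} ≃ Σ X`).
Here `Ω` is the loop functor, which in the stable category `Ch` is the shift `⟦-1⟧`;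
the homotopy pullback of the cospan is modeled as the desuspended cone of
`(f, -g) : F(cX) ⊕ F(cX) → F(ΣX)`.  (Consequently `P₁F(X) ≃ hocolim_p Ωᵖ F(Σᵖ X)`,
the colimit of the iterates of `T₁`.)
-/
theorem stmt_9 (F : Ch k ⥤ Ch k) (hh : IsHomotopyF F) (hred : IsReducedF F) (X : Ch k) :
    WeaklyEquivalent
      (hoPullback (F.map (joinMap₁ X)) (F.map (joinMap₂ X)))
      ((F.obj (joinTwo X))⟦(-1 : ℤ)⟧) := by
  -- `F (joinOne X)` is acyclic since `joinOne X` is contractible and `F` is reduced.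
  have hFc : ∀ n : ℤ, (F.obj (joinOne X)).ExactAt n := by
    have h0 : QuasiIso (0 : (0 : Ch k) ⟶ joinOne X) := by
      rw [quasiIso_iff]
      intro i
      rw [quasiIsoAt_iff_exactAt _ _ (exactAt_zeroComplex i)]
      exact exactAt_joinOne X i
    intro n
    have hq := hh _ h0
    rw [← quasiIsoAt_iff_exactAt (F.map (0 : (0 : Ch k) ⟶ joinOne X)) n (hred n)]
    exact hq.quasiIsoAt n
  set ψ : F.obj (joinOne X) ⊞ F.obj (joinOne X) ⟶ F.obj (joinTwo X) :=
    biprod.desc (F.map (joinMap₁ X)) (-(F.map (joinMap₂ X))) with hψ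
  have hinr : QuasiIso (CochainComplex.mappingCone.inr ψ) :=
    quasiIso_inr_of_exact ψ (fun n => exactAt_biprod (hFc n) (hFc n))
  exact ⟨(F.obj (joinTwo X))⟦(-1 : ℤ)⟧,
    (CochainComplex.mappingCone.inr ψ)⟦(-1 : ℤ)⟧', 𝟙 _, (CochainComplex.quasiIso_shift_iff _ _).2 hinr, inferInstance⟩

end GoodwillieLinear
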